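/- The maximum-volume inscribed ellipsoid of the polytope B_{1,+} = {x ∈ ℝ^r : x ≥ 0, 𝟙ᵀx ≤ 1} is the ellipsoid {C u + g : ‖u‖₂ ≤ 1} with center g = (1/(r+1))𝟙 and shape matrix C = (1/√r)·[(1/√(r+1)) I − ((√(r+1) − 1)/(r² + r)) 𝟙𝟙ᵀ]; in particular C² = (1/r)[(1/(r+1)) I − (1/(r+1)²) 𝟙𝟙ᵀ]. -/

import Mathlib

open Matrix Finset

lemma csum_aux {n : ℕ} (f g : Fin n → ℝ) :
    ∑ i, f i * g i ≤ Real.sqrt (∑ i, f i ^ 2) * Real.sqrt (∑ i, g i ^ 2) := by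
  have h0f : (0:ℝ) ≤ ∑ i, f i ^ 2 := Finset.sum_nonneg fun i _ => sq_nonneg _
  have h := Finset.sum_mul_sq_le_sq_mul_sq Finset.univ f g
  have h2 : (∑ i, f i * g i) ^ 2 ≤ (∑ i, f i ^ 2) * (∑ i, g i ^ 2) := by
    simpa [pow_two] using h
  calc ∑ i, f i * g i ≤ |∑ i, f i * g i| := le_abs_self _
    _ = Real.sqrt ((∑ i, f i * g i) ^ 2) := (Real.sqrt_sq_eq_abs _).symm
    _ ≤ Real.sqrt ((∑ i, f i ^ 2) * (∑ i, g i ^ 2)) := Real.sqrt_le_sqrt h2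
    _ = _ := Real.sqrt_mul h0f _

lemma trace_eq_sum_eig {n : ℕ} {S : Matrix (Fin n) (Fin n) ℝ} (hS : S.IsHermitian) :
    S.trace = ∑ i, hS.eigenvalues i := by
  nth_rewrite 1 [hS.spectral_theorem]
  rw [Unitary.conjStarAlgAut_apply]
  rw [Matrix.trace_mul_cycle]
  have : (star (hS.eigenvectorUnitary : Matrix (Fin n) (Fin n) ℝ)) *
      (hS.eigenvectorUnitary : Matrix (Fin n) (Fin n) ℝ) = 1 :=
    Unitary.coe_star_mul_self _
  rw [this, one_mul, Matrix.trace_diagonal]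
  simp

lemma det_le_trace_pow {n : ℕ} (hn : 0 < n) {S : Matrix (Fin n) (Fin n) ℝ}
    (hS : S.PosSemidef) : 0 ≤ S.trace ∧ S.det ≤ (S.trace / n) ^ n := by
  have hH := hS.isHermitian
  have hev : ∀ i, 0 ≤ hH.eigenvalues i := hS.eigenvalues_nonneg
  have htr : S.trace = ∑ i, hH.eigenvalues i := trace_eq_sum_eig hH
  have htr0 : 0 ≤ S.trace := htr ▸ Finset.sum_nonneg fun i _ => hev i
  refine ⟨htr0, ?_⟩
  have hdet : S.det = ∏ i, hH.eigenvalues i := by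
    simpa using hH.det_eq_prod_eigenvalues
  have hn' : (0:ℝ) < n := by exact_mod_cast hn
  have amgm := Real.geom_mean_le_arith_mean_weighted Finset.univ
      (fun _ => (n:ℝ)⁻¹) hH.eigenvalues (fun i _ => by positivity)
      (by simp [Finset.card_univ]; field_simp) (fun i _ => hev i)
  have h1 : ∏ i, hH.eigenvalues i ^ ((n:ℝ)⁻¹) = (∏ i, hH.eigenvalues i) ^ ((n:ℝ)⁻¹) := by
    rw [← Real.finset_prod_rpow Finset.univ _ (fun i _ => hev i)]
  have hsum : ∑ i, (n:ℝ)⁻¹ * hH.eigenvalues i = S.trace / n := by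
    rw [htr, Finset.sum_div]
    exact Finset.sum_congr rfl fun i _ => by field_simp
  have h2 : (∏ i, hH.eigenvalues i) ^ ((n:ℝ)⁻¹) ≤ S.trace / n := by
    rw [← h1, ← hsum]; exact amgm
  have hprod0 : 0 ≤ ∏ i, hH.eigenvalues i := Finset.prod_nonneg fun i _ => hev i
  have key := pow_le_pow_left₀ (Real.rpow_nonneg hprod0 _) h2 n
  rw [← Real.rpow_natCast ((∏ i, hH.eigenvalues i) ^ ((n:ℝ)⁻¹)) n, ← Real.rpow_mul hprod0,
    inv_mul_cancel₀ (by positivity : (n:ℝ) ≠ 0), Real.rpow_one] at key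
  rw [hdet]
  exact key

set_option maxHeartbeats 2000000 in
/-- The maximum-volume inscribed ellipsoid of the simplex
`B_{1,+} = {x : x ≥ 0, 𝟙ᵀx ≤ 1}` has center `g = 𝟙/(r+1)` and shape matrix
`C = (1/√r)[(1/√(r+1)) I − ((√(r+1)−1)/(r²+r)) 𝟙𝟙ᵀ]`; in particular
`C² = (1/r)[(1/(r+1)) I − (1/(r+1)²) 𝟙𝟙ᵀ]`. -/
theorem stmt15 (r : ℕ) (hr : 0 < r) (C : Matrix (Fin r) (Fin r) ℝ) (g : Fin r → ℝ)
    (hC : C = (1 / Real.sqrt r) •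
      ((1 / Real.sqrt ((r : ℝ) + 1)) • (1 : Matrix (Fin r) (Fin r) ℝ)
        - ((Real.sqrt ((r : ℝ) + 1) - 1) / ((r : ℝ) ^ 2 + r)) •
            Matrix.of fun _ _ => (1 : ℝ)))
    (hg : g = fun _ => 1 / ((r : ℝ) + 1)) :
    ({x | ∃ u : Fin r → ℝ, ∑ i, (u i) ^ 2 ≤ 1 ∧ x = C.mulVec u + g} ⊆
        {x : Fin r → ℝ | (∀ i, 0 ≤ x i) ∧ ∑ i, x i ≤ 1}) ∧
    (∀ (C' : Matrix (Fin r) (Fin r) ℝ) (g' : Fin r → ℝ), C'.PosSemidef →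
      {x | ∃ u : Fin r → ℝ, ∑ i, (u i) ^ 2 ≤ 1 ∧ x = C'.mulVec u + g'} ⊆
        {x : Fin r → ℝ | (∀ i, 0 ≤ x i) ∧ ∑ i, x i ≤ 1} →
      C'.det ≤ C.det) ∧
    C * C = (1 / (r : ℝ)) •
      ((1 / ((r : ℝ) + 1)) • (1 : Matrix (Fin r) (Fin r) ℝ)
        - (1 / ((r : ℝ) + 1) ^ 2) • Matrix.of fun _ _ => (1 : ℝ)) := by
  subst hg
  have hr0 : (0:ℝ) < (r:ℝ) := by exact_mod_cast hr
  set sr := Real.sqrt (r:ℝ) with hsrdef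
  set s1 := Real.sqrt ((r:ℝ)+1) with hs1def
  have hsr0 : 0 < sr := Real.sqrt_pos.2 hr0
  have hs10 : 0 < s1 := Real.sqrt_pos.2 (by linarith)
  have hsr2 : sr^2 = (r:ℝ) := Real.sq_sqrt hr0.le
  have hs12 : s1^2 = (r:ℝ)+1 := Real.sq_sqrt (by linarith)
  set a := 1/sr * (1/s1) with ha
  set b := -(1/sr * ((s1-1)/((r:ℝ)^2+(r:ℝ)))) with hb
  have h_a2 : a^2 = 1/((r:ℝ)*((r:ℝ)+1)) := by
    rw [ha]; field_simp
    linear_combination (-(s1^2)) * hsr2 + (-(r:ℝ)) * hs12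
  have h_ab : 2*a*b + (r:ℝ)*b^2 = -(1/((r:ℝ)*((r:ℝ)+1)^2)) := by
    rw [ha, hb]; field_simp
    grind
  have h_apb : a + (r:ℝ)*b = 1/(sr*((r:ℝ)+1)) := by
    rw [ha, hb]; field_simp
    grind
  have h_row : a^2 + (2*a*b + (r:ℝ)*b^2) = (1/((r:ℝ)+1))^2 := by
    rw [h_a2, h_ab]; field_simp; ring
  have h_rapb : (r:ℝ)*(a+(r:ℝ)*b)^2 = (1/((r:ℝ)+1))^2 := by
    rw [h_apb]; field_simp
    linear_combination (-1) * hsr2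
  -- matrix framework
  set J : Matrix (Fin r) (Fin r) ℝ := Matrix.of (fun _ _ => (1:ℝ)) with hJdef
  have hJJ : J * J = (r:ℝ) • J := by
    ext i j
    simp [hJdef, Matrix.mul_apply, Finset.sum_const, Finset.card_univ, nsmul_eq_mul]
  have hsq : ∀ α β : ℝ, (α • (1:Matrix (Fin r) (Fin r) ℝ) + β • J) * (α • 1 + β • J)
      = (α^2) • (1:Matrix (Fin r) (Fin r) ℝ) + (2*α*β + (r:ℝ)*β^2) • J := by
    intro α β
    rw [add_mul, mul_add, mul_add]
    simp only [Matrix.smul_mul, Matrix.mul_smul, one_mul, mul_one, hJJ, smul_smul]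
    module
  have hCJ : C = a • (1:Matrix (Fin r) (Fin r) ℝ) + b • J := by
    rw [hC, ha, hb, smul_sub, smul_smul, smul_smul]
    module
  have hCe : ∀ i j, C i j = (if i = j then a else 0) + b := by
    intro i j
    by_cases h : i = j <;>
      simp [hCJ, hJdef, Matrix.add_apply, Matrix.smul_apply, Matrix.one_apply, h]
  have hCsum : ∀ j, ∑ i, C i j = a + (r:ℝ)*b := by
    intro j
    simp only [hCe]
    rw [Finset.sum_add_distrib]
    simp [Finset.sum_ite_eq, Finset.sum_const, Finset.card_univ, nsmul_eq_mul]
  have hrow2 : ∀ i, ∑ j, (C i j)^2 = a^2 + (2*a*b + (r:ℝ)*b^2) := by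
    intro i
    simp only [hCe]
    have h1 : ∀ j, ((if i = j then a else 0) + b)^2
        = (if i = j then a^2 + 2*a*b else 0) + b^2 := by
      intro j; split_ifs <;> ring
    rw [Finset.sum_congr rfl fun j _ => h1 j, Finset.sum_add_distrib]
    simp [Finset.sum_ite_eq, Finset.sum_const, Finset.card_univ, nsmul_eq_mul]
    ring
  have hJC : J * C = (a + (r:ℝ)*b) • J := by
    ext i j
    simp only [Matrix.mul_apply, hJdef, Matrix.of_apply, Matrix.smul_apply, one_mul]
    rw [hCsum j]
    simp [smul_eq_mul]
  have hCC2 : C * C = (a^2) • (1:Matrix (Fin r) (Fin r) ℝ) + (2*a*b + (r:ℝ)*b^2) • J := by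
    rw [hCJ]; exact hsq a b
  have hr1pos : (0:ℝ) < 1/((r:ℝ)+1) := by positivity
  have hsqrow : ∀ i, Real.sqrt (∑ j, (C i j)^2) = 1/((r:ℝ)+1) := by
    intro i
    rw [hrow2 i, h_row]
    exact Real.sqrt_sq hr1pos.le
  -- PART 3
  have part3 : C * C = (1 / (r : ℝ)) •
      ((1 / ((r : ℝ) + 1)) • (1 : Matrix (Fin r) (Fin r) ℝ)
        - (1 / ((r : ℝ) + 1) ^ 2) • Matrix.of fun _ _ => (1 : ℝ)) := by
    rw [hCC2, h_a2, h_ab]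
    rw [show (Matrix.of fun _ _ => (1:ℝ)) = J from rfl]
    rw [smul_sub, smul_smul, smul_smul]
    have e1 : 1/((r:ℝ)*((r:ℝ)+1)) = 1/(r:ℝ) * (1/((r:ℝ)+1)) := by
      field_simp
    have e2 : -(1/((r:ℝ)*((r:ℝ)+1)^2)) = -(1/(r:ℝ) * (1/((r:ℝ)+1)^2)) := by
      field_simp
    rw [e1, e2]
    module
  -- PART 1
  have part1 : {x | ∃ u : Fin r → ℝ, ∑ i, (u i) ^ 2 ≤ 1 ∧
      x = C.mulVec u + (fun _ => 1 / ((r : ℝ) + 1))} ⊆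
      {x : Fin r → ℝ | (∀ i, 0 ≤ x i) ∧ ∑ i, x i ≤ 1} := by
    rintro x ⟨u, hu, rfl⟩
    have hsu : Real.sqrt (∑ i, u i ^ 2) ≤ 1 := by
      have := Real.sqrt_le_sqrt hu
      rwa [Real.sqrt_one] at this
    refine ⟨fun i => ?_, ?_⟩
    · simp only [Pi.add_apply]
      have hcs := csum_aux (fun j => -(C i j)) u
      have hneg : ∑ j, (fun j => -(C i j)) j ^ 2 = ∑ j, (C i j)^2 := by
        simp [neg_sq]
      rw [hneg, hsqrow i] at hcs
      have hbd : 1/((r:ℝ)+1) * Real.sqrt (∑ i, u i ^ 2) ≤ 1/((r:ℝ)+1) :=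
        mul_le_of_le_one_right hr1pos.le hsu
      have hmv : C.mulVec u i = ∑ j, C i j * u j := rfl
      have hthis : ∑ j, (fun j => -(C i j)) j * u j = -(∑ j, C i j * u j) := by
        rw [← Finset.sum_neg_distrib]
        exact Finset.sum_congr rfl fun j _ => by ring
      rw [hthis] at hcs
      rw [hmv]
      linarith
    · simp only [Pi.add_apply]
      have hswap : ∑ i, (C.mulVec u i + 1 / ((r:ℝ)+1))
          = (∑ j, (a + (r:ℝ)*b) * u j) + (r:ℝ) * (1/((r:ℝ)+1)) := by
        rw [Finset.sum_add_distrib]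
        congr 1
        · have h1 : ∀ i, C.mulVec u i = ∑ j, C i j * u j := fun i => rfl
          rw [Finset.sum_congr rfl fun i _ => h1 i, Finset.sum_comm]
          exact Finset.sum_congr rfl fun j _ => by rw [← Finset.sum_mul, hCsum j]
        · simp [Finset.sum_const, Finset.card_univ, nsmul_eq_mul]
      rw [hswap]
      have hcs := csum_aux (fun _ => a + (r:ℝ)*b) u
      have hconst : ∑ _j : Fin r, (a + (r:ℝ)*b)^2 = (r:ℝ)*(a+(r:ℝ)*b)^2 := by
        simp [Finset.sum_const, Finset.card_univ, nsmul_eq_mul]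
      simp only [hconst] at hcs
      rw [h_rapb, Real.sqrt_sq hr1pos.le] at hcs
      have hbd : 1/((r:ℝ)+1) * Real.sqrt (∑ i, u i ^ 2) ≤ 1/((r:ℝ)+1) :=
        mul_le_of_le_one_right hr1pos.le hsu
      have hfin : 1/((r:ℝ)+1) + (r:ℝ)*(1/((r:ℝ)+1)) = 1 := by
        field_simp
        try ring
      linarith
  -- PART 2
  have part2 : ∀ (C' : Matrix (Fin r) (Fin r) ℝ) (g' : Fin r → ℝ), C'.PosSemidef →
      {x | ∃ u : Fin r → ℝ, ∑ i, (u i) ^ 2 ≤ 1 ∧ x = C'.mulVec u + g'} ⊆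
        {x : Fin r → ℝ | (∀ i, 0 ≤ x i) ∧ ∑ i, x i ≤ 1} →
      C'.det ≤ C.det := by
    intro C' g' hpsd hsub
    have hC'sym : ∀ i j, C' i j = C' j i := by
      intro i j
      nth_rewrite 1 [← hpsd.isHermitian]
      simp [Matrix.conjTranspose_apply]
    have hgmem : (∀ i, 0 ≤ g' i) ∧ ∑ i, g' i ≤ 1 := by
      apply hsub
      exact ⟨0, by simp, by simp [Matrix.mulVec_zero]⟩
    -- column norm bounds
    have hcol : ∀ i, Real.sqrt (∑ j, (C' j i)^2) ≤ g' i := by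
      intro i
      set t := Real.sqrt (∑ j, (C' j i)^2) with htdef
      have ht0 : 0 ≤ t := Real.sqrt_nonneg _
      have ht2 : t^2 = ∑ j, (C' j i)^2 :=
        Real.sq_sqrt (Finset.sum_nonneg fun j _ => sq_nonneg _)
      by_cases hz : t = 0
      · rw [hz]; exact hgmem.1 i
      · set u : Fin r → ℝ := fun j => -(C' j i)/t with hudef
        have hu1 : ∑ j, u j ^ 2 = 1 := by
          simp only [hudef, div_pow, neg_sq]
          rw [← Finset.sum_div, ← ht2]
          field_simp
        have hmem := hsub ⟨u, le_of_eq hu1, rfl⟩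
        have h0 := hmem.1 i
        have hval : C'.mulVec u i = -t := by
          show ∑ j, C' i j * u j = -t
          have h3 : ∀ j, C' i j * u j = -((C' j i)^2/t) := by
            intro j; rw [hudef, hC'sym i j]; ring
          rw [Finset.sum_congr rfl fun j _ => h3 j, Finset.sum_neg_distrib,
            ← Finset.sum_div, ← ht2]
          field_simp
        rw [Pi.add_apply, hval] at h0
        linarith
    -- the 𝟙 direction bound
    have hone : Real.sqrt (∑ j, (∑ k, C' j k)^2) ≤ 1 - ∑ i, g' i := by
      set w : Fin r → ℝ := fun j => ∑ k, C' j k with hwdef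
      set t := Real.sqrt (∑ j, w j ^ 2) with htdef
      have ht0 : 0 ≤ t := Real.sqrt_nonneg _
      have ht2 : t^2 = ∑ j, w j ^ 2 :=
        Real.sq_sqrt (Finset.sum_nonneg fun j _ => sq_nonneg _)
      by_cases hz : t = 0
      · rw [hz]; linarith [hgmem.2]
      · set u : Fin r → ℝ := fun j => w j / t with hudef
        have hu1 : ∑ j, u j ^ 2 = 1 := by
          simp only [hudef, div_pow]
          rw [← Finset.sum_div, ← ht2]
          field_simp
        have hmem := hsub ⟨u, le_of_eq hu1, rfl⟩
        have h1 := hmem.2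
        have hval : ∑ i, C'.mulVec u i = t := by
          have h3 : ∀ i, C'.mulVec u i = ∑ j, C' i j * (w j / t) := fun i => rfl
          rw [Finset.sum_congr rfl fun i _ => h3 i, Finset.sum_comm]
          have h4 : ∀ j, ∑ i, C' i j * (w j / t) = w j ^ 2 / t := by
            intro j
            rw [← Finset.sum_mul]
            have h4b : ∑ i, C' i j = w j := by
              rw [hwdef]
              exact Finset.sum_congr rfl fun i _ => hC'sym i j
            rw [h4b]; ring
          rw [Finset.sum_congr rfl fun j _ => h4 j, ← Finset.sum_div, ← ht2]
          field_simp
        have h6 : ∑ i, (C'.mulVec u + g') i = ∑ i, C'.mulVec u i + ∑ i, g' i := by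
          simp only [Pi.add_apply]
          exact Finset.sum_add_distrib
        rw [h6, hval] at h1
        linarith
    -- inverse square root matrix R
    set p := Real.sqrt (sr*s1) with hpdef
    set w1 := Real.sqrt (sr*((r:ℝ)+1)) with hw1def
    have hp2 : p^2 = sr*s1 := Real.sq_sqrt (by positivity)
    have hw12 : w1^2 = sr*((r:ℝ)+1) := Real.sq_sqrt (by positivity)
    set q := (w1-p)/(r:ℝ) with hqdef
    have he1 : p^2 = (r:ℝ)*((r:ℝ)+1)*a := by
      rw [hp2, ha]; field_simp
      linear_combination (s1^2)*hsr2 + (r:ℝ)*hs12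
    have hq : 2*p*q + (r:ℝ)*q^2 = (w1^2 - p^2)/(r:ℝ) := by
      rw [hqdef]; field_simp; ring
    have he2 : 2*p*q + (r:ℝ)*q^2 = (r:ℝ)*((r:ℝ)+1)*b + sr := by
      rw [hq, hw12, hp2, hb]; field_simp
      grind
    have hf1 : (r:ℝ)*((r:ℝ)+1)*(a^2) = 1 := by
      rw [h_a2]; field_simp
    have hf2 : (r:ℝ)*((r:ℝ)+1)*(2*a*b + (r:ℝ)*b^2) + sr*(a + (r:ℝ)*b) = 0 := by
      rw [h_ab, h_apb]; field_simp
      ring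
    set R : Matrix (Fin r) (Fin r) ℝ := p • (1:Matrix (Fin r) (Fin r) ℝ) + q • J with hRdef
    have hRH : Rᴴ = R := by
      ext i j
      by_cases h : i = j <;>
        simp [hRdef, hJdef, Matrix.conjTranspose_apply, Matrix.add_apply, Matrix.smul_apply,
          Matrix.one_apply, h, eq_comm]
    have hS : (R*C'*R).PosSemidef := by
      have := hpsd.mul_mul_conjTranspose_same R
      rwa [hRH] at this
    have hRR : R*R = (p^2) • (1:Matrix (Fin r) (Fin r) ℝ) + (2*p*q + (r:ℝ)*q^2) • J := by
      rw [hRdef]; exact hsq p q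
    have hE : R*R = ((r:ℝ)*((r:ℝ)+1)) • C + sr • J := by
      rw [hRR, he1, he2, hCJ]
      module
    -- trace bound
    have htrace : ∀ (M : Matrix (Fin r) (Fin r) ℝ), M.trace = ∑ i, M i i := fun M => rfl
    have htrCC : (C*C').trace ≤ ∑ i, 1/((r:ℝ)+1) * g' i := by
      rw [htrace]
      apply Finset.sum_le_sum
      intro i _
      have h7 : (C*C') i i = ∑ j, C i j * C' j i := Matrix.mul_apply
      rw [h7]
      have hcs := csum_aux (C i) (fun j => C' j i)
      rw [hsqrow i] at hcs
      calc ∑ j, C i j * C' j i ≤ 1/((r:ℝ)+1) * Real.sqrt (∑ j, (C' j i)^2) := hcs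
        _ ≤ 1/((r:ℝ)+1) * g' i :=
          mul_le_mul_of_nonneg_left (hcol i) hr1pos.le
    have htrJC : (J*C').trace ≤ sr * (1 - ∑ i, g' i) := by
      rw [htrace]
      have h8 : ∀ i, (J*C') i i = ∑ j, C' j i := by
        intro i
        rw [Matrix.mul_apply]
        exact Finset.sum_congr rfl fun j _ => by simp [hJdef]
      rw [Finset.sum_congr rfl fun i _ => h8 i, Finset.sum_comm]
      have hcs := csum_aux (fun _ : Fin r => (1:ℝ)) (fun j => ∑ i, C' j i)
      simp only [one_mul, one_pow] at hcs
      have h9 : ∑ _j : Fin r, (1:ℝ) = (r:ℝ) := by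
        simp [Finset.sum_const, Finset.card_univ]
      rw [h9] at hcs
      have h10 : ∀ j, ∑ i, C' j i = ∑ k, C' j k := fun j => rfl
      calc ∑ j, ∑ i, C' j i ≤ Real.sqrt (r:ℝ) * Real.sqrt (∑ j, (∑ i, C' j i)^2) := hcs
        _ ≤ sr * (1 - ∑ i, g' i) := by
          rw [← hsrdef]
          exact mul_le_mul_of_nonneg_left hone hsr0.le
    have htr : (R*C'*R).trace ≤ (r:ℝ) := by
      rw [Matrix.trace_mul_cycle, hE, Matrix.add_mul, Matrix.smul_mul, Matrix.smul_mul,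
        Matrix.trace_add, Matrix.trace_smul, Matrix.trace_smul]
      have hb1 : ((r:ℝ)*((r:ℝ)+1)) • (C*C').trace ≤ ((r:ℝ)*((r:ℝ)+1)) * (∑ i, 1/((r:ℝ)+1) * g' i) := by
        rw [smul_eq_mul]
        exact mul_le_mul_of_nonneg_left htrCC (by positivity)
      have hb2 : sr • (J*C').trace ≤ sr * (sr * (1 - ∑ i, g' i)) := by
        rw [smul_eq_mul]
        exact mul_le_mul_of_nonneg_left htrJC hsr0.le
      have hb3 : ((r:ℝ)*((r:ℝ)+1)) * (∑ i, 1/((r:ℝ)+1) * g' i) + sr * (sr * (1 - ∑ i, g' i)) = (r:ℝ) := by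
        rw [← Finset.mul_sum]
        have hG : ((r:ℝ)*((r:ℝ)+1)) * (1/((r:ℝ)+1) * ∑ i, g' i) = (r:ℝ) * ∑ i, g' i := by
          field_simp
        rw [hG]
        linear_combination (1 - ∑ i, g' i) * hsr2
      linarith
    -- determinant identities
    have hdRRC : R*R*C = 1 := by
      rw [hE, Matrix.add_mul, Matrix.smul_mul, Matrix.smul_mul, hJC, hCC2]
      have : ((r:ℝ)*((r:ℝ)+1)) • ((a^2) • (1:Matrix (Fin r) (Fin r) ℝ)
            + (2*a*b + (r:ℝ)*b^2) • J) + sr • ((a + (r:ℝ)*b) • J)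
          = ((r:ℝ)*((r:ℝ)+1)*(a^2)) • (1:Matrix (Fin r) (Fin r) ℝ)
            + ((r:ℝ)*((r:ℝ)+1)*(2*a*b + (r:ℝ)*b^2) + sr*(a + (r:ℝ)*b)) • J := by
        module
      rw [this, hf1, hf2]
      simp
    have hRRC := congrArg Matrix.det hdRRC
    rw [Matrix.det_mul, Matrix.det_mul, Matrix.det_one] at hRRC
    have hCpos : 0 < C.det := by
      by_contra h
      push_neg at h
      nlinarith [mul_self_nonneg R.det]
    obtain ⟨htr0, hd⟩ := det_le_trace_pow hr hS
    have hS1 : (R*C'*R).det ≤ 1 := by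
      refine hd.trans (pow_le_one₀ (div_nonneg htr0 hr0.le) ?_)
      rw [div_le_one hr0]
      exact htr
    calc C'.det = (R*C'*R).det * C.det := by
          rw [Matrix.det_mul, Matrix.det_mul]
          linear_combination (-C'.det) * hRRC
      _ ≤ 1 * C.det := mul_le_mul_of_nonneg_right hS1 hCpos.le
      _ = C.det := one_mul _
  exact ⟨part1, part2, part3⟩
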